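/- arXiv:1203.4020 — 3 statements merged into one kernel-verified Lean document; each statement's English description precedes it below -/
import Mathlib

section
/- Let T > 0, let X be a locally compact Polish space, let ν be a Borel measure on X that is finite on compact sets, let ν_T = λ_T ⊗ ν on [0,T] × X, and fix a compact set K ⊆ X. Fix N ∈ ℕ and let g_n, g ∈ S^N with ∫_{[0,T]×K} g dν_T ≠ 0 and ∫_{[0,T]×K} g_n dν_T ≠ 0 for all n, and suppose that for every bounded continuous function f : [0,T] × K → ℝ, ∫_{[0,T]×K} f·g_n dν_T → ∫_{[0,T]×K} f·g dν_T as n → ∞. Then for every bounded measurable function h : [0,T] × K → ℝ, ∫_{[0,T]×K} h·g_n dν_T → ∫_{[0,T]×K} h·g dν_T as n → ∞. -/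
open MeasureTheory Set BoundedContinuousFunction
open scoped ENNReal

/-- `l(r) = r·log r − r + 1` (note `Real.log 0 = 0` in Mathlib, so `ell 0 = 1`). -/
noncomputable def ell (r : ℝ) : ℝ := r * Real.log r - r + 1

/-- `ν_T = λ_T ⊗ ν` on `[0,T] × X`. -/
noncomputable def nuT {X : Type*} [MeasurableSpace X] (T : ℝ) (ν : Measure X) :
    Measure (ℝ × X) := (volume.restrict (Icc 0 T)).prod ν

lemma aux_tail {α : Type*} [MeasurableSpace α] (μ : Measure α)
    (g : α → ℝ) (hg : Measurable g) (hnn : ∀ p, 0 ≤ g p) (N : ℝ≥0∞)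
    (hN : ∫⁻ p, ENNReal.ofReal (ell (g p)) ∂μ ≤ N) {M : ℝ} (hM : Real.exp 2 ≤ M) :
    ∫⁻ p in {p | M < g p}, ENNReal.ofReal (g p) ∂μ ≤ N / ENNReal.ofReal (Real.log M - 1) := by
  have hMpos : (0:ℝ) < M := lt_of_lt_of_le (Real.exp_pos 2) hM
  have hlogM : (2:ℝ) ≤ Real.log M := by
    rw [← Real.log_exp 2]
    exact Real.log_le_log (Real.exp_pos 2) hM
  have hc0 : ENNReal.ofReal (Real.log M - 1) ≠ 0 := by
    simp [ENNReal.ofReal_eq_zero]; linarith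
  have hctop : ENNReal.ofReal (Real.log M - 1) ≠ ∞ := ENNReal.ofReal_ne_top
  rw [ENNReal.le_div_iff_mul_le (Or.inl hc0) (Or.inl hctop)]
  calc (∫⁻ p in {p | M < g p}, ENNReal.ofReal (g p) ∂μ) * ENNReal.ofReal (Real.log M - 1)
      = ∫⁻ p in {p | M < g p}, ENNReal.ofReal (g p) * ENNReal.ofReal (Real.log M - 1) ∂μ :=
        (lintegral_mul_const _ (hg.ennreal_ofReal)).symm
    _ ≤ ∫⁻ p in {p | M < g p}, ENNReal.ofReal (ell (g p)) ∂μ := by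
        have hm : Measurable fun p => ENNReal.ofReal (ell (g p)) :=
          (((hg.mul (Real.measurable_log.comp hg)).sub hg).add_const 1).ennreal_ofReal
        refine setLIntegral_mono hm fun p hp => ?_
        rw [← ENNReal.ofReal_mul (hnn p)]
        refine ENNReal.ofReal_le_ofReal ?_
        have hgp : M < g p := hp
        have hlog : Real.log M ≤ Real.log (g p) := Real.log_le_log hMpos hgp.le
        have : g p * Real.log M ≤ g p * Real.log (g p) :=
          mul_le_mul_of_nonneg_left hlog (hnn p)
        unfold ell; nlinarith
    _ ≤ ∫⁻ p, ENNReal.ofReal (ell (g p)) ∂μ := setLIntegral_le_lintegral _ _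
    _ ≤ N := hN

lemma aux_l1 {α : Type*} [MeasurableSpace α] (μ : Measure α)
    (g : α → ℝ) (hnn : ∀ p, 0 ≤ g p) (N : ℝ≥0∞)
    (hN : ∫⁻ p, ENNReal.ofReal (ell (g p)) ∂μ ≤ N) (s : Set α) :
    ∫⁻ p in s, ENNReal.ofReal (g p) ∂μ ≤ ENNReal.ofReal (Real.exp 2) * μ s + N := by
  have key : ∀ p, ENNReal.ofReal (g p) ≤ ENNReal.ofReal (Real.exp 2) + ENNReal.ofReal (ell (g p)) := by
    intro p
    rcases le_or_gt (g p) (Real.exp 2) with hle | hlt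
    · exact le_add_of_le_of_nonneg (ENNReal.ofReal_le_ofReal hle) (zero_le)
    · refine le_add_of_nonneg_of_le (zero_le) (ENNReal.ofReal_le_ofReal ?_)
      have hlog : (2:ℝ) ≤ Real.log (g p) := by
        rw [← Real.log_exp 2]
        exact Real.log_le_log (Real.exp_pos 2) hlt.le
      have : g p * 2 ≤ g p * Real.log (g p) := mul_le_mul_of_nonneg_left hlog (hnn p)
      unfold ell; nlinarith
  calc ∫⁻ p in s, ENNReal.ofReal (g p) ∂μ
      ≤ ∫⁻ p in s, (ENNReal.ofReal (Real.exp 2) + ENNReal.ofReal (ell (g p))) ∂μ :=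
        lintegral_mono fun p => key p
    _ = ENNReal.ofReal (Real.exp 2) * μ s + ∫⁻ p in s, ENNReal.ofReal (ell (g p)) ∂μ := by
        rw [lintegral_add_left measurable_const, setLIntegral_const]
    _ ≤ ENNReal.ofReal (Real.exp 2) * μ s + N :=
        add_le_add_right (le_trans (setLIntegral_le_lintegral _ _) hN) _

lemma aux_clamp {x y C : ℝ} (hC : 0 ≤ C) (hx : |x| ≤ C) :
    |x - max (min y C) (-C)| ≤ |x - y| := by
  rw [abs_le] at hx
  rcases le_total y (-C) with h1 | h1
  · rw [min_eq_left (by linarith : y ≤ C), max_eq_right h1, abs_of_nonneg (by linarith)]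
    calc x - -C ≤ x - y := by linarith
      _ ≤ |x - y| := le_abs_self _
  rcases le_total C y with h2 | h2
  · rw [min_eq_right h2, max_eq_left (by linarith), abs_of_nonpos (by linarith)]
    calc -(x - C) ≤ -(x - y) := by linarith
      _ ≤ |x - y| := neg_le_abs _
  · rw [min_eq_left h2, max_eq_left (by linarith)]

/-- If `g_n, g ∈ S^N` have nonzero mass on `[0,T] × K` and
`∫_{[0,T]×K} f·g_n dν_T → ∫_{[0,T]×K} f·g dν_T` for every bounded continuous `f` on
`[0,T] × K`, then the same convergence holds for every bounded measurable `h` on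
`[0,T] × K`. -/
theorem convergence_extends_to_bounded_measurable
    (T : ℝ) (hT : 0 < T)
    {X : Type*} [TopologicalSpace X] [PolishSpace X] [LocallyCompactSpace X]
    [MeasurableSpace X] [BorelSpace X]
    (ν : Measure X) [IsFiniteMeasureOnCompacts ν]
    (N : ℕ) (K : Set X) (hK : IsCompact K)
    (gn : ℕ → ℝ × X → ℝ) (g : ℝ × X → ℝ)
    (hgnmeas : ∀ n, Measurable (gn n)) (hgmeas : Measurable g)
    (hgnnonneg : ∀ n p, 0 ≤ gn n p) (hgnonneg : ∀ p, 0 ≤ g p)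
    (hgnS : ∀ n, ∫⁻ p, ENNReal.ofReal (ell (gn n p)) ∂(nuT T ν) ≤ (N : ℝ≥0∞))
    (hgS : ∫⁻ p, ENNReal.ofReal (ell (g p)) ∂(nuT T ν) ≤ (N : ℝ≥0∞))
    (hgne : ∫ p in (univ : Set ℝ) ×ˢ K, g p ∂(nuT T ν) ≠ 0)
    (hgnne : ∀ n, ∫ p in (univ : Set ℝ) ×ˢ K, gn n p ∂(nuT T ν) ≠ 0)
    (hconv : ∀ f : ℝ × X → ℝ, ContinuousOn f (Icc 0 T ×ˢ K) →
      (∃ C : ℝ, ∀ p ∈ Icc (0:ℝ) T ×ˢ K, |f p| ≤ C) →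
      Filter.Tendsto (fun n => ∫ p in (univ : Set ℝ) ×ˢ K, f p * gn n p ∂(nuT T ν))
        Filter.atTop (nhds (∫ p in (univ : Set ℝ) ×ˢ K, f p * g p ∂(nuT T ν)))) :
    ∀ h : ℝ × X → ℝ, Measurable h → (∃ C : ℝ, ∀ p ∈ Icc (0:ℝ) T ×ˢ K, |h p| ≤ C) →
      Filter.Tendsto (fun n => ∫ p in (univ : Set ℝ) ×ˢ K, h p * gn n p ∂(nuT T ν))
        Filter.atTop (nhds (∫ p in (univ : Set ℝ) ×ˢ K, h p * g p ∂(nuT T ν))) := by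
  intro h hhmeas hhbd
  obtain ⟨C₀, hC₀⟩ := hhbd
  set C : ℝ := max C₀ 1 with hCdef
  have hC1 : (1:ℝ) ≤ C := le_max_right _ _
  have hCpos : (0:ℝ) < C := lt_of_lt_of_le one_pos hC1
  have hCbd : ∀ p ∈ Icc (0:ℝ) T ×ˢ K, |h p| ≤ C := fun p hp =>
    le_trans (hC₀ p hp) (le_max_left _ _)
  set μ0 : Measure (ℝ × X) := nuT T ν with hμ0def
  set S : Set (ℝ × X) := (univ : Set ℝ) ×ˢ K with hSdef
  have hKm : MeasurableSet K := hK.measurableSet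
  have hSm : MeasurableSet S := MeasurableSet.univ.prod hKm
  have hSfin : μ0 S < ∞ := by
    rw [hμ0def, hSdef, nuT, Measure.prod_prod, Measure.restrict_apply_univ]
    exact ENNReal.mul_lt_top (by rw [Real.volume_Icc]; exact ENNReal.ofReal_lt_top)
      hK.measure_lt_top
  set μ : Measure (ℝ × X) := μ0.restrict S with hμdef
  haveI : IsFiniteMeasure μ := ⟨by rwa [hμdef, Measure.restrict_apply_univ]⟩
  -- a.e. membership in Icc 0 T ×ˢ K
  have hae : ∀ᵐ p ∂μ, p ∈ Icc (0:ℝ) T ×ˢ K := by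
    rw [hμdef, ae_restrict_iff' hSm, ae_iff]
    have hsub : {p : ℝ × X | ¬(p ∈ S → p ∈ Icc (0:ℝ) T ×ˢ K)}
        ⊆ (Icc (0:ℝ) T)ᶜ ×ˢ (univ : Set X) := by
      intro p hp
      simp only [mem_setOf_eq, Classical.not_imp] at hp
      exact ⟨fun hmem => hp.2 ⟨hmem, hp.1.2⟩, trivial⟩
    refine measure_mono_null hsub ?_
    rw [hμ0def, nuT, Measure.prod_prod, Measure.restrict_apply measurableSet_Icc.compl]
    simp
  have haeh : ∀ᵐ p ∂μ, |h p| ≤ C := hae.mono fun p hp => hCbd p hp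
  -- integrability of the densities
  have hgl1 : ∀ g' : ℝ × X → ℝ, Measurable g' → (∀ p, 0 ≤ g' p) →
      (∫⁻ p, ENNReal.ofReal (ell (g' p)) ∂μ0 ≤ (N : ℝ≥0∞)) → Integrable g' μ := by
    intro g' hm hnn hb
    refine ⟨hm.aestronglyMeasurable, ?_⟩
    rw [hasFiniteIntegral_iff_ofReal (Filter.Eventually.of_forall hnn)]
    refine lt_of_le_of_lt (aux_l1 μ0 g' hnn N hb S) ?_
    exact ENNReal.add_lt_top.mpr ⟨ENNReal.mul_lt_top ENNReal.ofReal_lt_top hSfin,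
      ENNReal.natCast_lt_top N⟩
  have hprodint : ∀ (φ g' : ℝ × X → ℝ), AEStronglyMeasurable φ μ → (∀ᵐ p ∂μ, |φ p| ≤ C) →
      Measurable g' → (∀ p, 0 ≤ g' p) → Integrable g' μ →
      Integrable (fun p => φ p * g' p) μ := by
    intro φ g' hφm hφb hg'm hg'nn hg'int
    refine Integrable.mono' (hg'int.const_mul C) (hφm.mul hg'm.aestronglyMeasurable) ?_
    filter_upwards [hφb] with p hp
    rw [Real.norm_eq_abs, abs_mul, abs_of_nonneg (hg'nn p)]
    exact mul_le_mul_of_nonneg_right hp (hg'nn p)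
  have hhint : Integrable h μ := by
    refine Integrable.mono' (integrable_const C) hhmeas.aestronglyMeasurable ?_
    filter_upwards [haeh] with p hp
    rwa [Real.norm_eq_abs]
  rw [Metric.tendsto_atTop]
  intro ε hε
  -- constants
  set M : ℝ := Real.exp (2 + 12 * C * (N + 1) / ε) with hMdef
  have hM2 : Real.exp 2 ≤ M := by
    refine Real.exp_le_exp.mpr ?_
    have : (0:ℝ) ≤ 12 * C * (N + 1) / ε := by positivity
    linarith
  have hMpos : (0:ℝ) < M := Real.exp_pos _
  have hlogM : Real.log M - 1 = 1 + 12 * C * (N + 1) / ε := by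
    rw [hMdef, Real.log_exp]; ring
  have hlogM1 : (1:ℝ) ≤ Real.log M - 1 := by
    rw [hlogM]
    have : (0:ℝ) ≤ 12 * C * (N + 1) / ε := by positivity
    linarith
  set δ : ℝ := ε / (12 * M) with hδdef
  have hδpos : 0 < δ := by positivity
  -- continuous approximation
  haveI : NormalSpace (ℝ × X) := by
    letI := TopologicalSpace.metrizableSpaceMetric (ℝ × X)
    infer_instance
  obtain ⟨f, hf1, hf2⟩ := hhint.exists_boundedContinuous_integral_sub_le hδpos
  set ft : ℝ × X → ℝ := fun p => max (min (f p) C) (-C) with hftdef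
  have hftcont : Continuous ft := (f.continuous.min continuous_const).max continuous_const
  have hftbd : ∀ p, |ft p| ≤ C := fun p => abs_le.mpr
    ⟨le_max_right _ _, max_le (min_le_right _ _) (by linarith)⟩
  have hclose : ∀ᵐ p ∂μ, |h p - ft p| ≤ |h p - f p| :=
    haeh.mono fun p hp => aux_clamp hCpos.le hp
  have hL1 : ∫⁻ p, ENNReal.ofReal |h p - ft p| ∂μ ≤ ENNReal.ofReal δ := by
    calc ∫⁻ p, ENNReal.ofReal |h p - ft p| ∂μ
        ≤ ∫⁻ p, ENNReal.ofReal |h p - f p| ∂μ :=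
          lintegral_mono_ae (hclose.mono fun p hp => ENNReal.ofReal_le_ofReal hp)
      _ = ENNReal.ofReal (∫ p, |h p - f p| ∂μ) := by
          have habsint : Integrable (fun p => |h p - f p|) μ := (hhint.sub hf2).abs
          exact (ofReal_integral_eq_lintegral_ofReal habsint
            (Filter.Eventually.of_forall fun p => abs_nonneg _)).symm
      _ ≤ ENNReal.ofReal δ := by
          refine ENNReal.ofReal_le_ofReal ?_
          calc ∫ p, |h p - f p| ∂μ = ∫ p, ‖h p - f p‖ ∂μ := by
                simp_rw [Real.norm_eq_abs]
            _ ≤ δ := hf1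
  -- the key estimate for a single density
  have key : ∀ g' : ℝ × X → ℝ, Measurable g' → (∀ p, 0 ≤ g' p) →
      (∫⁻ p, ENNReal.ofReal (ell (g' p)) ∂μ0 ≤ (N : ℝ≥0∞)) →
      |(∫ p, h p * g' p ∂μ) - ∫ p, ft p * g' p ∂μ| ≤ ε / 12 + ε / 6 := by
    intro g' hm hnn hb
    have hint : Integrable g' μ := hgl1 g' hm hnn hb
    have hint1 : Integrable (fun p => h p * g' p) μ :=
      hprodint h g' hhmeas.aestronglyMeasurable haeh hm hnn hint
    have hint2 : Integrable (fun p => ft p * g' p) μ :=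
      hprodint ft g' hftcont.aestronglyMeasurable (Filter.Eventually.of_forall hftbd) hm hnn hint
    have hdiff : (∫ p, h p * g' p ∂μ) - ∫ p, ft p * g' p ∂μ
        = ∫ p, (h p - ft p) * g' p ∂μ := by
      rw [← integral_sub hint1 hint2]
      exact integral_congr_ae (Filter.Eventually.of_forall fun p => by ring)
    rw [hdiff]
    have step1 : |∫ p, (h p - ft p) * g' p ∂μ| ≤ ∫ p, |h p - ft p| * g' p ∂μ := by
      rw [← Real.norm_eq_abs]
      refine le_trans (norm_integral_le_integral_norm _) (le_of_eq ?_)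
      refine integral_congr_ae (Filter.Eventually.of_forall fun p => ?_)
      show ‖(h p - ft p) * g' p‖ = |h p - ft p| * g' p
      rw [Real.norm_eq_abs, abs_mul, abs_of_nonneg (hnn p)]
    refine le_trans step1 ?_
    -- pass to lintegral
    set c : ℝ≥0∞ := ENNReal.ofReal (Real.log M - 1) with hcdef
    have hc0 : c ≠ 0 := by
      rw [hcdef]; simp only [ne_eq, ENNReal.ofReal_eq_zero, not_le]; linarith
    have htail : ∫⁻ p in {p | M < g' p}, ENNReal.ofReal (g' p) ∂μ0 ≤ (N : ℝ≥0∞) / c :=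
      aux_tail μ0 g' hm hnn N hb hM2
    have hptwise : ∀ᵐ p ∂μ, ENNReal.ofReal (|h p - ft p| * g' p)
        ≤ ENNReal.ofReal M * ENNReal.ofReal |h p - ft p|
          + ENNReal.ofReal (2 * C) * Set.indicator {q | M < g' q}
              (fun q => ENNReal.ofReal (g' q)) p := by
      filter_upwards [haeh] with p hp
      rcases le_or_gt (g' p) M with hgM | hgM
      · rw [Set.indicator_of_notMem (show p ∉ {q | M < g' q} by simpa using not_lt.mpr hgM), mul_zero, add_zero,
          ← ENNReal.ofReal_mul hMpos.le]
        refine ENNReal.ofReal_le_ofReal ?_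
        rw [mul_comm (M : ℝ)]
        exact mul_le_mul_of_nonneg_left hgM (abs_nonneg _)
      · rw [Set.indicator_of_mem (show p ∈ {q | M < g' q} from hgM)]
        have hb2 : |h p - ft p| ≤ 2 * C := by
          have h1 := hftbd p
          have h2 : |h p - ft p| ≤ |h p| + |ft p| := abs_sub _ _
          linarith
        calc ENNReal.ofReal (|h p - ft p| * g' p)
            ≤ ENNReal.ofReal ((2 * C) * g' p) :=
              ENNReal.ofReal_le_ofReal (mul_le_mul_of_nonneg_right hb2 (hnn p))
          _ = ENNReal.ofReal (2 * C) * ENNReal.ofReal (g' p) :=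
              ENNReal.ofReal_mul (by positivity)
          _ ≤ _ := le_add_self
    have hIm : Measurable fun p => Set.indicator {q | M < g' q}
        (fun q => ENNReal.ofReal (g' q)) p :=
      Measurable.indicator hm.ennreal_ofReal (measurableSet_lt measurable_const hm)
    have hAbsm : Measurable fun p => ENNReal.ofReal |h p - ft p| :=
      ((hhmeas.sub hftcont.measurable).abs).ennreal_ofReal
    have hlintle : ∫⁻ p, ENNReal.ofReal (|h p - ft p| * g' p) ∂μ
        ≤ ENNReal.ofReal M * ENNReal.ofReal δ + ENNReal.ofReal (2 * C) * ((N : ℝ≥0∞) / c) := by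
      calc ∫⁻ p, ENNReal.ofReal (|h p - ft p| * g' p) ∂μ
          ≤ ∫⁻ p, (ENNReal.ofReal M * ENNReal.ofReal |h p - ft p|
              + ENNReal.ofReal (2 * C) * Set.indicator {q | M < g' q}
                  (fun q => ENNReal.ofReal (g' q)) p) ∂μ := lintegral_mono_ae hptwise
        _ = ENNReal.ofReal M * ∫⁻ p, ENNReal.ofReal |h p - ft p| ∂μ
            + ENNReal.ofReal (2 * C) * ∫⁻ p, Set.indicator {q | M < g' q}
                (fun q => ENNReal.ofReal (g' q)) p ∂μ := by
            rw [lintegral_add_left (hAbsm.const_mul _), lintegral_const_mul _ hAbsm,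
              lintegral_const_mul _ hIm]
        _ ≤ ENNReal.ofReal M * ENNReal.ofReal δ + ENNReal.ofReal (2 * C) * ((N : ℝ≥0∞) / c) := by
            refine add_le_add (mul_le_mul_right hL1 _) (mul_le_mul_right ?_ _)
            calc ∫⁻ p, Set.indicator {q | M < g' q} (fun q => ENNReal.ofReal (g' q)) p ∂μ
                = ∫⁻ p in {q | M < g' q}, ENNReal.ofReal (g' p) ∂μ :=
                  lintegral_indicator (measurableSet_lt measurable_const hm) _
              _ ≤ ∫⁻ p in {q | M < g' q}, ENNReal.ofReal (g' p) ∂μ0 := by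
                  rw [hμdef, Measure.restrict_restrict (measurableSet_lt measurable_const hm)]
                  exact lintegral_mono' (Measure.restrict_mono inter_subset_left le_rfl) le_rfl
              _ ≤ (N : ℝ≥0∞) / c := htail
    have hRHSne : ENNReal.ofReal M * ENNReal.ofReal δ
        + ENNReal.ofReal (2 * C) * ((N : ℝ≥0∞) / c) ≠ ∞ := by
      refine ENNReal.add_ne_top.mpr ⟨ENNReal.mul_ne_top ENNReal.ofReal_ne_top
        ENNReal.ofReal_ne_top, ENNReal.mul_ne_top ENNReal.ofReal_ne_top ?_⟩
      exact (ENNReal.div_lt_top (ENNReal.natCast_ne_top N) hc0).ne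
    have step2 : ∫ p, |h p - ft p| * g' p ∂μ
        ≤ M * δ + 2 * C * ((N : ℝ) / (Real.log M - 1)) := by
      rw [integral_eq_lintegral_of_nonneg_ae (f := fun p => |h p - ft p| * g' p)
        (Filter.Eventually.of_forall fun p => mul_nonneg (abs_nonneg _) (hnn p))
        (((hhmeas.sub hftcont.measurable).abs.mul hm).aestronglyMeasurable)]
      refine le_trans (ENNReal.toReal_mono hRHSne hlintle) ?_
      rw [ENNReal.toReal_add (ENNReal.mul_ne_top ENNReal.ofReal_ne_top ENNReal.ofReal_ne_top)
        (ENNReal.mul_ne_top ENNReal.ofReal_ne_top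
          (ENNReal.div_lt_top (ENNReal.natCast_ne_top N) hc0).ne),
        ENNReal.toReal_mul, ENNReal.toReal_mul, ENNReal.toReal_ofReal hMpos.le,
        ENNReal.toReal_ofReal hδpos.le, ENNReal.toReal_ofReal (by positivity : (0:ℝ) ≤ 2 * C),
        ENNReal.toReal_div, hcdef, ENNReal.toReal_ofReal (by linarith), ENNReal.toReal_natCast]
    refine le_trans step2 ?_
    have hMδ : M * δ = ε / 12 := by
      rw [hδdef]; field_simp
    have htail2 : 2 * C * ((N : ℝ) / (Real.log M - 1)) ≤ ε / 6 := by
      have ha : (0:ℝ) < 1 + 12 * C * ((N:ℝ) + 1) / ε := by positivity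
      have heq : ε * (12 * C * ((N:ℝ) + 1) / ε) = 12 * C * ((N:ℝ) + 1) := by
        field_simp
      have hNnn : (0:ℝ) ≤ (N:ℝ) := Nat.cast_nonneg N
      rw [hlogM]
      calc 2 * C * ((N:ℝ) / (1 + 12 * C * ((N:ℝ) + 1) / ε))
          = (2 * C * (N:ℝ)) / (1 + 12 * C * ((N:ℝ) + 1) / ε) := by ring
        _ ≤ ε / 6 := by
            rw [div_le_div_iff₀ ha (by norm_num : (0:ℝ) < 6)]
            nlinarith [hCpos, hε, heq, hNnn]
    linarith
  -- middle term from the hypothesis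
  have hmid := hconv ft hftcont.continuousOn ⟨C, fun p _ => hftbd p⟩
  rw [Metric.tendsto_atTop] at hmid
  obtain ⟨n0, hn0⟩ := hmid (ε / 3) (by positivity)
  refine ⟨n0, fun n hn => ?_⟩
  have e1 := key (gn n) (hgnmeas n) (hgnnonneg n) (hgnS n)
  have e2 := key g hgmeas hgnonneg hgS
  have e3 := hn0 n hn
  rw [Real.dist_eq] at e3 ⊢
  have e2' : |(∫ p, ft p * g p ∂μ) - ∫ p, h p * g p ∂μ| ≤ ε / 12 + ε / 6 := by
    rw [abs_sub_comm]; exact e2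
  have tri : |(∫ p, h p * gn n p ∂μ) - ∫ p, h p * g p ∂μ|
      ≤ |(∫ p, h p * gn n p ∂μ) - ∫ p, ft p * gn n p ∂μ|
        + |(∫ p, ft p * gn n p ∂μ) - ∫ p, ft p * g p ∂μ|
        + |(∫ p, ft p * g p ∂μ) - ∫ p, h p * g p ∂μ| := by
    calc |(∫ p, h p * gn n p ∂μ) - ∫ p, h p * g p ∂μ|
        ≤ |(∫ p, h p * gn n p ∂μ) - ∫ p, ft p * g p ∂μ|
          + |(∫ p, ft p * g p ∂μ) - ∫ p, h p * g p ∂μ| := abs_sub_le _ _ _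
      _ ≤ (|(∫ p, h p * gn n p ∂μ) - ∫ p, ft p * gn n p ∂μ|
          + |(∫ p, ft p * gn n p ∂μ) - ∫ p, ft p * g p ∂μ|)
          + |(∫ p, ft p * g p ∂μ) - ∫ p, h p * g p ∂μ| :=
        add_le_add_left (abs_sub_le _ _ _) _
  linarith
end

section
/- Let (Z, 𝒵, μ) be a finite measure space with 0 < μ(Z) < ∞, let N ∈ (0,∞), and let g : Z → [0,∞) be measurable with ∫_Z l(g) dμ ≤ N and m := ∫_Z g dμ ∈ (0,∞). Let μ̃ be the probability measure with density g/m with respect to μ, and let θ = μ/μ(Z). Then the relative entropy (Kullback–Leibler divergence) satisfies R(μ̃ ‖ θ) ≤ N/m + 1 − μ(Z)/m + log(μ(Z)/m). -/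
open MeasureTheory Set
open scoped ENNReal

lemma ell_nonneg {r : ℝ} (hr : 0 ≤ r) : 0 ≤ ell r := by
  rcases hr.eq_or_lt with h | h
  · simp [ell, ← h]
  · have h1 : 1 - r⁻¹ ≤ Real.log r := Real.one_sub_inv_le_log_of_pos h
    have h2 : r * (1 - r⁻¹) ≤ r * Real.log r := mul_le_mul_of_nonneg_left h1 h.le
    have h3 : r * r⁻¹ = 1 := mul_inv_cancel₀ h.ne'
    unfold ell; nlinarith

/-- Let `(Z, μ)` be a finite measure space with `0 < μ(Z) < ∞`,
`N ∈ (0,∞)`, and `g ≥ 0` measurable with `∫ l(g) dμ ≤ N` and `m = ∫ g dμ ∈ (0,∞)`.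
Let `μ̃` be the probability measure with density `g/m` w.r.t. `μ` and `θ = μ/μ(Z)`.
Then `μ̃ ≪ θ` and the relative entropy `R(μ̃‖θ) = ∫ log(dμ̃/dθ) dμ̃` satisfies
`R(μ̃‖θ) ≤ N/m + 1 − μ(Z)/m + log(μ(Z)/m)`. -/
theorem relative_entropy_bound_of_cost_bound
    {Z : Type*} [MeasurableSpace Z] (μ : Measure Z) [IsFiniteMeasure μ]
    (hμpos : 0 < μ Set.univ)
    (N : ℝ) (hN : 0 < N)
    (g : Z → ℝ) (hgmeas : Measurable g) (hgnonneg : ∀ z, 0 ≤ g z)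
    (hcost : ∫⁻ z, ENNReal.ofReal (ell (g z)) ∂μ ≤ ENNReal.ofReal N)
    (m : ℝ) (hm : 0 < m)
    (hmass : ∫⁻ z, ENNReal.ofReal (g z) ∂μ = ENNReal.ofReal m) :
    μ.withDensity (fun z => ENNReal.ofReal (g z / m)) ≪ (μ Set.univ)⁻¹ • μ ∧
      ∫ z, Real.log
          (((μ.withDensity (fun z => ENNReal.ofReal (g z / m))).rnDeriv
            ((μ Set.univ)⁻¹ • μ) z).toReal)
          ∂(μ.withDensity (fun z => ENNReal.ofReal (g z / m)))
        ≤ N / m + 1 - (μ Set.univ).toReal / m + Real.log ((μ Set.univ).toReal / m) := by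
  set f : Z → ℝ≥0∞ := fun z => ENNReal.ofReal (g z / m) with hf_def
  set ν : Measure Z := μ.withDensity f with hν_def
  set θ : Measure Z := (μ Set.univ)⁻¹ • μ with hθ_def
  have hμtop : μ Set.univ ≠ ⊤ := measure_ne_top μ _
  have hμ0 : μ Set.univ ≠ 0 := hμpos.ne'
  set c : ℝ := (μ Set.univ).toReal with hc_def
  have hc : 0 < c := ENNReal.toReal_pos hμ0 hμtop
  have hinv0 : (μ Set.univ)⁻¹ ≠ 0 := ENNReal.inv_ne_zero.mpr hμtop
  have hfmeas : Measurable f := (hgmeas.div_const m).ennreal_ofReal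
  -- absolute continuity
  have hμθ : μ ≪ θ := by
    intro s hs
    rw [hθ_def, Measure.smul_apply, smul_eq_mul] at hs
    exact (mul_eq_zero.mp hs).resolve_left hinv0
  have hAC : ν ≪ θ := (withDensity_absolutelyContinuous μ f).trans hμθ
  refine ⟨hAC, ?_⟩
  haveI : IsFiniteMeasure θ := by
    constructor
    rw [hθ_def, Measure.smul_apply, smul_eq_mul]
    exact ENNReal.mul_lt_top (ENNReal.inv_lt_top.mpr hμpos) hμtop.lt_top
  -- identify ν as a withDensity over θ
  have hν_eq : ν = θ.withDensity (fun z => μ Set.univ * f z) := by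
    rw [hθ_def, withDensity_smul_measure, show (fun z => μ Set.univ * f z) = (μ Set.univ) • f from rfl,
      withDensity_smul' _ _ hμtop, smul_smul, ENNReal.inv_mul_cancel hμ0 hμtop, one_smul]
  have hrnθ : ν.rnDeriv θ =ᵐ[θ] fun z => μ Set.univ * f z := by
    rw [hν_eq]
    exact Measure.rnDeriv_withDensity θ (measurable_const.mul hfmeas)
  have hrnν : ν.rnDeriv θ =ᵐ[ν] fun z => μ Set.univ * f z := hAC.ae_le hrnθ
  -- ν-a.e. positivity of g
  have hg0 : ν {z | g z = 0} = 0 := by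
    have hs : MeasurableSet {z | g z = 0} := hgmeas (measurableSet_singleton 0)
    rw [hν_def, withDensity_apply _ hs]
    have hz0 : ∀ z ∈ {z | g z = 0}, f z = (fun _ => (0 : ℝ≥0∞)) z := fun z hz => by
      simp only [Set.mem_setOf_eq] at hz
      simp [hf_def, hz]
    rw [setLIntegral_congr_fun hs hz0, lintegral_zero]
  have hgpos : ∀ᵐ z ∂ν, 0 < g z := by
    have : ∀ᵐ z ∂ν, g z ≠ 0 := by
      rw [ae_iff]; simpa using hg0
    filter_upwards [this] with z hz
    exact lt_of_le_of_ne (hgnonneg z) (Ne.symm hz)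
  -- a.e. identity for the integrand
  have h_ae : (fun z => Real.log ((ν.rnDeriv θ z).toReal))
      =ᵐ[ν] fun z => Real.log c - Real.log m + Real.log (g z) := by
    filter_upwards [hrnν, hgpos] with z hz hzpos
    rw [hz]
    simp only [hf_def]
    rw [ENNReal.toReal_mul, ENNReal.toReal_ofReal (div_nonneg (hgnonneg z) hm.le), ← hc_def,
      Real.log_mul hc.ne' (div_ne_zero hzpos.ne' hm.ne'), Real.log_div hzpos.ne' hm.ne']
    ring
  -- transfer integrals over ν to integrals over μ
  have hsm : ∀ φ : Z → ℝ, ∫ z, φ z ∂ν = ∫ z, (g z / m) * φ z ∂μ := by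
    intro φ
    have h1 : ∫ z, φ z ∂(μ.withDensity (fun z => ((g z / m).toNNReal : ℝ≥0∞)))
        = ∫ z, (g z / m).toNNReal • φ z ∂μ :=
      integral_withDensity_eq_integral_smul (hgmeas.div_const m).real_toNNReal φ
    rw [hν_def, show f = fun z => ((g z / m).toNNReal : ℝ≥0∞) from rfl, h1]
    refine integral_congr_ae (ae_of_all _ fun z => ?_)
    simp [NNReal.smul_def, Real.coe_toNNReal _ (div_nonneg (hgnonneg z) hm.le)]
  -- integrability facts
  have hg_int : Integrable g μ := by
    refine ⟨hgmeas.aestronglyMeasurable, ?_⟩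
    rw [hasFiniteIntegral_iff_ofReal (ae_of_all _ hgnonneg), hmass]
    exact ENNReal.ofReal_lt_top
  have hellmeas : Measurable fun z => ell (g z) := by
    unfold ell
    exact ((hgmeas.mul (Real.measurable_log.comp hgmeas)).sub hgmeas).add_const 1
  have hell_int : Integrable (fun z => ell (g z)) μ := by
    refine ⟨hellmeas.aestronglyMeasurable, ?_⟩
    rw [hasFiniteIntegral_iff_ofReal (ae_of_all _ fun z => ell_nonneg (hgnonneg z))]
    exact lt_of_le_of_lt hcost ENNReal.ofReal_lt_top
  have hglog_eq : (fun z => g z * Real.log (g z)) = fun z => ell (g z) + g z - 1 := by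
    funext z; unfold ell; ring
  have hglog_int : Integrable (fun z => g z * Real.log (g z)) μ := by
    rw [hglog_eq]
    exact (hell_int.add hg_int).sub (integrable_const 1)
  -- integral values
  have hg_eq : ∫ z, g z ∂μ = m := by
    rw [integral_eq_lintegral_of_nonneg_ae (ae_of_all _ hgnonneg) hgmeas.aestronglyMeasurable,
      hmass, ENNReal.toReal_ofReal hm.le]
  have hell_le : ∫ z, ell (g z) ∂μ ≤ N := by
    rw [integral_eq_lintegral_of_nonneg_ae (ae_of_all _ fun z => ell_nonneg (hgnonneg z))
      hellmeas.aestronglyMeasurable]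
    calc (∫⁻ z, ENNReal.ofReal (ell (g z)) ∂μ).toReal
        ≤ (ENNReal.ofReal N).toReal := ENNReal.toReal_mono ENNReal.ofReal_ne_top hcost
      _ = N := ENNReal.toReal_ofReal hN.le
  have hone : ∫ (_ : Z), (1 : ℝ) ∂μ = c := by simp [hc_def, Measure.real]
  have hglog_le : ∫ z, g z * Real.log (g z) ∂μ ≤ N + m - c := by
    have h4 : (fun z => g z * Real.log (g z)) = fun z => ell (g z) + (g z - 1) := by
      funext z; unfold ell; ring
    have h5 : ∫ z, (ell (g z) + (g z - 1)) ∂μ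
        = (∫ z, ell (g z) ∂μ) + ∫ z, (g z - 1) ∂μ :=
      integral_add hell_int (hg_int.sub (integrable_const 1))
    have h6 : ∫ z, (g z - 1) ∂μ = (∫ z, g z ∂μ) - ∫ _, (1 : ℝ) ∂μ :=
      integral_sub hg_int (integrable_const 1)
    rw [h4, h5, h6, hg_eq, hone]
    linarith
  -- compute the entropy integral
  set A : ℝ := Real.log c - Real.log m with hA_def
  have key : ∫ z, Real.log ((ν.rnDeriv θ z).toReal) ∂ν
      = ∫ z, ((A / m) * g z + (1 / m) * (g z * Real.log (g z))) ∂μ := by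
    rw [integral_congr_ae h_ae, hsm]
    refine integral_congr_ae (ae_of_all _ fun z => ?_)
    field_simp
  rw [key, integral_add (hg_int.const_mul _) (hglog_int.const_mul _),
    integral_const_mul, integral_const_mul, hg_eq]
  have hlogdiv : Real.log (c / m) = A := (Real.log_div hc.ne' hm.ne')
  have h2 : (1 / m) * ∫ z, g z * Real.log (g z) ∂μ ≤ (1 / m) * (N + m - c) :=
    mul_le_mul_of_nonneg_left hglog_le (by positivity)
  have : A / m * m = A := by field_simp
  rw [this, hlogdiv]
  have h3 : (1 / m) * (N + m - c) = N / m + 1 - c / m := by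
    field_simp
  linarith
end

section
/- Let D > 0, V > 0, l > 0, and set c = V/(2D). Define φ_0(x) = √(2c/(1 − e^{−2cl})) and, for j ≥ 1, φ_j(x) = √(2/l)·e^{c·x}·sin((jπ/l)·x + α_j) with α_j = arctan(−jπ/(l·c)). Then the family {φ_j}_{j ≥ 0} is orthonormal in L²([0,l], ρ), where ρ(dx) = e^{−2cx} dx; that is, ∫_0^l φ_i(x)·φ_j(x)·e^{−2cx} dx = 1 if i = j and = 0 if i ≠ j, for all i, j ≥ 0. -/
open Real

lemma cont_ii {f : ℝ → ℝ} (hf : Continuous f) (a b : ℝ) :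
    IntervalIntegrable f MeasureTheory.volume a b := hf.intervalIntegrable a b

lemma integ_exp (c l : ℝ) (hc : c ≠ 0) :
    ∫ x in (0:ℝ)..l, Real.exp (-2*c*x) = (1 - Real.exp (-2*c*l)) / (2*c) := by
  have h : ∀ x ∈ Set.uIcc (0:ℝ) l,
      HasDerivAt (fun x => -Real.exp (-2*c*x)/(2*c)) (Real.exp (-2*c*x)) x := by
    intro x _
    have h1 : HasDerivAt (fun x : ℝ => -2*c*x) (-2*c) x := by
      simpa using (hasDerivAt_id x).const_mul (-2*c)
    have h2 := (h1.exp.neg.div_const (2*c))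
    refine h2.congr_deriv (Eq.symm ?_)
    field_simp
  rw [intervalIntegral.integral_eq_sub_of_hasDerivAt h (cont_ii (by fun_prop) _ _)]
  simp [Real.exp_zero]
  field_simp
  ring

lemma integ_exp_sin (c k a l : ℝ) (h : c^2 + k^2 ≠ 0) :
    ∫ x in (0:ℝ)..l, Real.exp (-c*x) * Real.sin (k*x+a) =
      ((c*Real.sin a + k*Real.cos a)
        - Real.exp (-c*l) * (c*Real.sin (k*l+a) + k*Real.cos (k*l+a))) / (c^2+k^2) := by
  have h1 : ∀ x ∈ Set.uIcc (0:ℝ) l,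
      HasDerivAt (fun x => -(Real.exp (-c*x) * (c * Real.sin (k*x+a) + k * Real.cos (k*x+a))) / (c^2+k^2))
        (Real.exp (-c*x) * Real.sin (k*x+a)) x := by
    intro x _
    have hu : HasDerivAt (fun x : ℝ => Real.exp (-c*x)) (Real.exp (-c*x) * (-c)) x := by
      exact (((hasDerivAt_id x).const_mul (-c)).congr_deriv (by simp)).exp
    have hlin : HasDerivAt (fun x : ℝ => k*x+a) k x := by
      simpa using (((hasDerivAt_id x).const_mul k).add_const a)
    have hv : HasDerivAt (fun x : ℝ => c * Real.sin (k*x+a) + k * Real.cos (k*x+a))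
        (c * (Real.cos (k*x+a) * k) + k * (-Real.sin (k*x+a) * k)) x :=
      ((hlin.sin).const_mul c).add ((hlin.cos).const_mul k)
    have h2 := ((hu.mul hv).neg.div_const (c^2+k^2))
    refine h2.congr_deriv (Eq.symm ?_)
    field_simp
    ring
  rw [intervalIntegral.integral_eq_sub_of_hasDerivAt h1 (cont_ii (by fun_prop) _ _)]
  simp [Real.exp_zero]
  ring

lemma integ_sin_sin (p q a b l : ℝ) (hpq : p ≠ q) (hpq' : p + q ≠ 0) :
    ∫ x in (0:ℝ)..l, Real.sin (p*x+a) * Real.sin (q*x+b) =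
      Real.sin ((p-q)*l + (a-b))/(2*(p-q)) - Real.sin ((p+q)*l+(a+b))/(2*(p+q))
        - Real.sin (a-b)/(2*(p-q)) + Real.sin (a+b)/(2*(p+q)) := by
  have hd : p - q ≠ 0 := sub_ne_zero.mpr hpq
  have h1 : ∀ x ∈ Set.uIcc (0:ℝ) l,
      HasDerivAt (fun x => Real.sin ((p-q)*x + (a-b))/(2*(p-q)) - Real.sin ((p+q)*x+(a+b))/(2*(p+q)))
        (Real.sin (p*x+a) * Real.sin (q*x+b)) x := by
    intro x _
    have hl1 : HasDerivAt (fun x : ℝ => (p-q)*x+(a-b)) (p-q) x := by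
      simpa using (((hasDerivAt_id x).const_mul (p-q)).add_const (a-b))
    have hl2 : HasDerivAt (fun x : ℝ => (p+q)*x+(a+b)) (p+q) x := by
      simpa using (((hasDerivAt_id x).const_mul (p+q)).add_const (a+b))
    have h2 := (hl1.sin.div_const (2*(p-q))).sub (hl2.sin.div_const (2*(p+q)))
    refine h2.congr_deriv (Eq.symm ?_)
    have hA : (p-q)*x+(a-b) = (p*x+a) - (q*x+b) := by ring
    have hB : (p+q)*x+(a+b) = (p*x+a) + (q*x+b) := by ring
    rw [hA, hB, Real.cos_sub (p*x+a) (q*x+b), Real.cos_add (p*x+a) (q*x+b)]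
    field_simp
    ring
  rw [intervalIntegral.integral_eq_sub_of_hasDerivAt h1 (cont_ii (by fun_prop) _ _)]
  simp
  ring

lemma integ_sin_sq (k a l : ℝ) (hk : k ≠ 0) :
    ∫ x in (0:ℝ)..l, Real.sin (k*x+a) * Real.sin (k*x+a) =
      l/2 - (Real.sin (2*(k*l+a)) - Real.sin (2*a))/(4*k) := by
  have h1 : ∀ x ∈ Set.uIcc (0:ℝ) l,
      HasDerivAt (fun x => x/2 - Real.sin (2*(k*x+a))/(4*k))
        (Real.sin (k*x+a) * Real.sin (k*x+a)) x := by
    intro x _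
    have hl1 : HasDerivAt (fun x : ℝ => 2*(k*x+a)) (2*k) x := by
      have := (((hasDerivAt_id x).const_mul k).add_const a).const_mul 2
      simpa using this
    have h2 := ((hasDerivAt_id x).div_const 2).sub (hl1.sin.div_const (4*k))
    refine h2.congr_deriv (Eq.symm ?_)
    have hs := Real.sin_sq_add_cos_sq (k*x+a)
    rw [Real.cos_two_mul (k*x+a)]
    field_simp
    linear_combination 8 * hs
  rw [intervalIntegral.integral_eq_sub_of_hasDerivAt h1 (cont_ii (by fun_prop) _ _)]
  simp
  ring

open Set

/-- With `c = V/(2D)`, the family `φ_0 = √(2c/(1 − e^{−2cl}))` and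
`φ_j(x) = √(2/l)·e^{cx}·sin((jπ/l)x + α_j)` (`j ≥ 1`, `α_j = arctan(−jπ/(lc))`) is
orthonormal in `L²([0,l], ρ)` with `ρ(dx) = e^{−2cx} dx`:
`∫₀ˡ φ_i φ_j e^{−2cx} dx = δ_{ij}`. -/
theorem neumann_eigenfunctions_orthonormal
    (D V l : ℝ) (hD : 0 < D) (hV : 0 < V) (hl : 0 < l)
    (c : ℝ) (hc : c = V / (2 * D))
    (α : ℕ → ℝ)
    (hα : ∀ j : ℕ, α j = Real.arctan (-((j : ℝ) * Real.pi) / (l * c)))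
    (φ : ℕ → ℝ → ℝ)
    (hφ0 : ∀ x : ℝ, φ 0 x = Real.sqrt (2 * c / (1 - Real.exp (-2 * c * l))))
    (hφ : ∀ j : ℕ, 1 ≤ j → ∀ x : ℝ,
      φ j x = Real.sqrt (2 / l) * Real.exp (c * x) *
        Real.sin ((j : ℝ) * Real.pi / l * x + α j)) :
    ∀ i j : ℕ,
      (∫ x in (0:ℝ)..l, φ i x * φ j x * Real.exp (-2 * c * x)) =
        if i = j then 1 else 0 := by
  have hc0 : 0 < c := by rw [hc]; positivity
  have hcne : c ≠ 0 := ne_of_gt hc0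
  have hl0 : l ≠ 0 := ne_of_gt hl
  have hπ : 0 < Real.pi := Real.pi_pos
  have hE : Real.exp (-2 * c * l) < 1 := by
    rw [Real.exp_lt_one_iff]; nlinarith
  have hE0 : 0 < 1 - Real.exp (-2 * c * l) := by linarith
  set K0 := Real.sqrt (2 * c / (1 - Real.exp (-2 * c * l))) with hK0def
  have hK0 : K0 * K0 = 2 * c / (1 - Real.exp (-2 * c * l)) :=
    Real.mul_self_sqrt (by positivity)
  have hK1 : Real.sqrt (2 / l) * Real.sqrt (2 / l) = 2 / l :=
    Real.mul_self_sqrt (by positivity)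
  have hN : ∀ n : ℕ, (0:ℝ) < Real.sqrt (1 + (-((n:ℝ) * Real.pi) / (l * c)) ^ 2) := by
    intro n; exact Real.sqrt_pos.mpr (by positivity)
  have hsin : ∀ n : ℕ, Real.sin (α n) =
      (-((n:ℝ) * Real.pi) / (l * c)) / Real.sqrt (1 + (-((n:ℝ) * Real.pi) / (l * c)) ^ 2) := by
    intro n; rw [hα]; exact Real.sin_arctan _
  have hcos : ∀ n : ℕ, Real.cos (α n) =
      1 / Real.sqrt (1 + (-((n:ℝ) * Real.pi) / (l * c)) ^ 2) := by
    intro n; rw [hα]; exact Real.cos_arctan _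
  have horth : ∀ n : ℕ,
      c * Real.sin (α n) + ((n:ℝ) * Real.pi / l) * Real.cos (α n) = 0 := by
    intro n
    rw [hsin, hcos]
    have h0 := (hN n).ne'
    field_simp
    ring
  have hkey : ∀ m n : ℕ,
      ((n:ℝ) * Real.pi / l) * (Real.sin (α m) * Real.cos (α n)) =
      ((m:ℝ) * Real.pi / l) * (Real.cos (α m) * Real.sin (α n)) := by
    intro m n
    rw [hsin m, hcos n, hcos m, hsin n]
    have h0 := (hN m).ne'
    have h1 := (hN n).ne'
    field_simp
  -- cross terms
  have cross : ∀ n : ℕ, 1 ≤ n →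
      (∫ x in (0:ℝ)..l, φ n x * φ 0 x * Real.exp (-2 * c * x)) = 0 := by
    intro n hn
    have hEq : Set.EqOn (fun x => φ n x * φ 0 x * Real.exp (-2 * c * x))
        (fun x => (Real.sqrt (2 / l) * K0) *
          (Real.exp (-c * x) * Real.sin ((n:ℝ) * Real.pi / l * x + α n))) (Set.uIcc 0 l) := by
      intro x _
      simp only [hφ n hn, hφ0]
      rw [show Real.exp (-c * x) = Real.exp (c * x) * Real.exp (-2 * c * x) by
        rw [← Real.exp_add]; congr 1; ring]
      ring
    rw [intervalIntegral.integral_congr hEq, intervalIntegral.integral_const_mul,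
      integ_exp_sin c ((n:ℝ) * Real.pi / l) (α n) l (by positivity)]
    have h1 := horth n
    have h2 : c * Real.sin ((n:ℝ) * Real.pi / l * l + α n)
        + ((n:ℝ) * Real.pi / l) * Real.cos ((n:ℝ) * Real.pi / l * l + α n) = 0 := by
      have harg : (n:ℝ) * Real.pi / l * l + α n = α n + (n:ℝ) * Real.pi := by
        field_simp; ring
      rw [harg, Real.sin_add_nat_mul_pi, Real.cos_add_nat_mul_pi]
      linear_combination ((-1:ℝ) ^ n) * h1
    rw [h1, h2]
    simp
  -- diagonal terms (n ≥ 1)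
  have diag : ∀ n : ℕ, 1 ≤ n →
      (∫ x in (0:ℝ)..l, φ n x * φ n x * Real.exp (-2 * c * x)) = 1 := by
    intro n hn
    have hEq : Set.EqOn (fun x => φ n x * φ n x * Real.exp (-2 * c * x))
        (fun x => (2 / l) * (Real.sin ((n:ℝ) * Real.pi / l * x + α n) *
          Real.sin ((n:ℝ) * Real.pi / l * x + α n))) (Set.uIcc 0 l) := by
      intro x _
      simp only [hφ n hn]
      have he : Real.exp (c * x) * Real.exp (c * x) * Real.exp (-2 * c * x) = 1 := by
        rw [← Real.exp_add, ← Real.exp_add, show c * x + c * x + -2 * c * x = 0 by ring,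
          Real.exp_zero]
      rw [show (Real.sqrt (2 / l) * Real.exp (c * x) * Real.sin ((n:ℝ) * Real.pi / l * x + α n))
          * (Real.sqrt (2 / l) * Real.exp (c * x) * Real.sin ((n:ℝ) * Real.pi / l * x + α n))
          * Real.exp (-2 * c * x)
          = (Real.sqrt (2 / l) * Real.sqrt (2 / l))
            * (Real.exp (c * x) * Real.exp (c * x) * Real.exp (-2 * c * x))
            * (Real.sin ((n:ℝ) * Real.pi / l * x + α n)
              * Real.sin ((n:ℝ) * Real.pi / l * x + α n)) by ring, hK1, he]
      ring
    have hk0 : ((n:ℝ) * Real.pi / l) ≠ 0 := by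
      have hn0 : (0:ℝ) < (n:ℝ) := by exact_mod_cast hn
      positivity
    rw [intervalIntegral.integral_congr hEq, intervalIntegral.integral_const_mul,
      integ_sin_sq ((n:ℝ) * Real.pi / l) (α n) l hk0]
    have harg : 2 * ((n:ℝ) * Real.pi / l * l + α n) = 2 * α n + (↑(2 * n) : ℝ) * Real.pi := by
      push_cast; field_simp; ring
    rw [harg, Real.sin_add_nat_mul_pi]
    rw [show ((-1:ℝ)) ^ (2 * n) = 1 by rw [pow_mul]; norm_num]
    field_simp
    ring
  -- off-diagonal (both ≥ 1)
  have offd : ∀ m n : ℕ, 1 ≤ m → 1 ≤ n → m ≠ n →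
      (∫ x in (0:ℝ)..l, φ m x * φ n x * Real.exp (-2 * c * x)) = 0 := by
    intro m n hm hn hmn
    have hm0 : (0:ℝ) < (m:ℝ) := by exact_mod_cast hm
    have hn0 : (0:ℝ) < (n:ℝ) := by exact_mod_cast hn
    set p := (m:ℝ) * Real.pi / l with hp
    set q := (n:ℝ) * Real.pi / l with hq
    have hp0 : 0 < p := by positivity
    have hq0 : 0 < q := by positivity
    have hpq : p ≠ q := by
      intro h
      apply hmn
      rw [hp, hq] at h
      field_simp at h
      exact_mod_cast h
    have hpq' : p + q ≠ 0 := by positivity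
    have hEq : Set.EqOn (fun x => φ m x * φ n x * Real.exp (-2 * c * x))
        (fun x => (2 / l) * (Real.sin (p * x + α m) * Real.sin (q * x + α n))) (Set.uIcc 0 l) := by
      intro x _
      simp only [hφ m hm, hφ n hn]
      have he : Real.exp (c * x) * Real.exp (c * x) * Real.exp (-2 * c * x) = 1 := by
        rw [← Real.exp_add, ← Real.exp_add, show c * x + c * x + -2 * c * x = 0 by ring,
          Real.exp_zero]
      rw [show (Real.sqrt (2 / l) * Real.exp (c * x) * Real.sin (p * x + α m))
          * (Real.sqrt (2 / l) * Real.exp (c * x) * Real.sin (q * x + α n))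
          * Real.exp (-2 * c * x)
          = (Real.sqrt (2 / l) * Real.sqrt (2 / l))
            * (Real.exp (c * x) * Real.exp (c * x) * Real.exp (-2 * c * x))
            * (Real.sin (p * x + α m) * Real.sin (q * x + α n)) by ring, hK1, he]
      ring
    rw [intervalIntegral.integral_congr hEq, intervalIntegral.integral_const_mul,
      integ_sin_sin p q (α m) (α n) l hpq hpq']
    -- endpoint sines
    have s1 : Real.sin ((p - q) * l + (α m - α n)) = (-1:ℝ) ^ (m + n) * Real.sin (α m - α n) := by
      have harg : (p - q) * l + (α m - α n)
          = (α m - α n) + ((m:ℤ) - (n:ℤ) : ℤ) * Real.pi := by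
        push_cast [hp, hq]; field_simp; ring
      rw [harg, Real.sin_add_int_mul_pi]
      congr 1
      have e1 : ((-1:ℝ)) ^ (2 * (n:ℤ)) = 1 := by
        rw [zpow_mul]; norm_num
      calc ((-1:ℝ)) ^ ((m:ℤ) - (n:ℤ))
          = ((-1:ℝ)) ^ ((m:ℤ) - (n:ℤ)) * ((-1:ℝ)) ^ (2 * (n:ℤ)) := by rw [e1, mul_one]
        _ = ((-1:ℝ)) ^ ((m:ℤ) - (n:ℤ) + 2 * (n:ℤ)) := (zpow_add₀ (by norm_num) _ _).symm
        _ = ((-1:ℝ)) ^ ((↑(m + n) : ℤ)) := by norm_num; ring_nf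
        _ = ((-1:ℝ)) ^ (m + n) := zpow_natCast _ _
    have s2 : Real.sin ((p + q) * l + (α m + α n)) = (-1:ℝ) ^ (m + n) * Real.sin (α m + α n) := by
      have harg : (p + q) * l + (α m + α n)
          = (α m + α n) + (↑(m + n) : ℝ) * Real.pi := by
        push_cast [hp, hq]; field_simp; ring
      rw [harg, Real.sin_add_nat_mul_pi]
    have hNm := (hN m).ne'
    have hNn := (hN n).ne'
    have hd : p - q ≠ 0 := sub_ne_zero.mpr hpq
    obtain ⟨w, hw1, hw2⟩ : ∃ w : ℝ, Real.sin (α m - α n) = w * (p - q)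
        ∧ Real.sin (α m + α n) = w * (p + q) := by
      refine ⟨-1 / (c * Real.sqrt (1 + (-((m:ℝ) * Real.pi) / (l * c)) ^ 2)
            * Real.sqrt (1 + (-((n:ℝ) * Real.pi) / (l * c)) ^ 2)), ?_, ?_⟩
      · rw [Real.sin_sub, hsin m, hcos n, hcos m, hsin n, hp, hq]
        field_simp
        ring
      · rw [Real.sin_add, hsin m, hcos n, hcos m, hsin n, hp, hq]
        field_simp
        ring
    rw [s1, s2, hw1, hw2]
    field_simp
    ring
  intro i j
  rcases i with _ | i <;> rcases j with _ | j
  · rw [if_pos rfl]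
    have hEq : Set.EqOn (fun x => φ 0 x * φ 0 x * Real.exp (-2 * c * x))
        (fun x => (2 * c / (1 - Real.exp (-2 * c * l))) * Real.exp (-2 * c * x)) (Set.uIcc 0 l) := by
      intro x _
      simp only [hφ0]
      rw [show K0 * K0 * Real.exp (-2 * c * x)
          = (K0 * K0) * Real.exp (-2 * c * x) by ring, hK0]
    rw [intervalIntegral.integral_congr hEq, intervalIntegral.integral_const_mul,
      integ_exp c l hcne]
    rw [div_mul_div_comm, mul_comm (1 - Real.exp (-2 * c * l)) (2 * c)]
    exact div_self (ne_of_gt (mul_pos (by positivity) hE0))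
  · rw [if_neg (by omega)]
    rw [intervalIntegral.integral_congr
      (g := fun x => φ (j + 1) x * φ 0 x * Real.exp (-2 * c * x)) (fun x _ => by ring)]
    exact cross (j + 1) (by omega)
  · rw [if_neg (by omega)]
    exact cross (i + 1) (by omega)
  · by_cases hij : i = j
    · subst hij
      rw [if_pos rfl]
      exact diag (i + 1) (by omega)
    · rw [if_neg (by omega)]
      exact offd (i + 1) (j + 1) (by omega) (by omega) (by omega)
end
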